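/- Let $p,q$ be positive coprime integers. Then the rational function $\lambda_{p,q}(u) = \frac{u^{pq}-1}{(u^p-1)(u^q-1)}$ equals $\frac{P(u)}{u-1}$ for some polynomial $P$ with integer coefficients such that $(u-1)$ does not divide $P$. Equivalently, $(u-1)(u^{pq}-1)$ is divisible by $(u^p-1)(u^q-1)$ in $\mathbb{Z}[u]$, and the quotient polynomial is not divisible by $u-1$. -/
import Mathlib


open Polynomial

/-- For positive coprime integers `p, q`, the rational function
`λ_{p,q}(u) = (u^{pq}-1)/((u^p-1)(u^q-1))` equals `P(u)/(u-1)` for a polynomial `P`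
over `ℤ` not divisible by `u - 1`; i.e. `(u^p-1)(u^q-1) ∣ (u-1)(u^{pq}-1)` in `ℤ[u]`
with quotient not divisible by `u - 1`. -/
theorem lambda_pq_eq_poly_div (p q : ℕ) (hp : 0 < p) (hq : 0 < q)
    (hpq : Nat.Coprime p q) :
    ∃ P : Polynomial ℤ,
      ((X : Polynomial ℤ) ^ p - 1) * (X ^ q - 1) * P = (X - 1) * (X ^ (p * q) - 1) ∧
      ¬ (X - 1 ∣ P) := by
  classical
  set Dp := p.divisors with hDp
  set Dq := q.divisors with hDq
  set Dpq := (p * q).divisors with hDpq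
  have hpq0 : 0 < p * q := Nat.mul_pos hp hq
  have hsub : Dp ∪ Dq ⊆ Dpq := by
    intro d hd
    rcases Finset.mem_union.mp hd with h | h
    · exact Nat.mem_divisors.mpr ⟨(Nat.mem_divisors.mp h).1.mul_right q, hpq0.ne'⟩
    · exact Nat.mem_divisors.mpr ⟨(Nat.mem_divisors.mp h).1.mul_left p, hpq0.ne'⟩
  have hint : Dp ∩ Dq = {1} := by
    ext d
    simp only [Finset.mem_inter, Nat.mem_divisors, Finset.mem_singleton, hDp, hDq]
    constructor
    · rintro ⟨⟨hdp, -⟩, ⟨hdq, -⟩⟩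
      exact Nat.eq_one_of_dvd_one (hpq ▸ Nat.dvd_gcd hdp hdq)
    · rintro rfl
      exact ⟨⟨one_dvd _, hp.ne'⟩, ⟨one_dvd _, hq.ne'⟩⟩
  refine ⟨∏ d ∈ Dpq \ (Dp ∪ Dq), cyclotomic d ℤ, ?_, ?_⟩
  · have h1 : (X : ℤ[X]) ^ p - 1 = ∏ d ∈ Dp, cyclotomic d ℤ :=
      (prod_cyclotomic_eq_X_pow_sub_one hp ℤ).symm
    have h2 : (X : ℤ[X]) ^ q - 1 = ∏ d ∈ Dq, cyclotomic d ℤ :=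
      (prod_cyclotomic_eq_X_pow_sub_one hq ℤ).symm
    have h3 : (X : ℤ[X]) ^ (p * q) - 1 = ∏ d ∈ Dpq, cyclotomic d ℤ :=
      (prod_cyclotomic_eq_X_pow_sub_one hpq0 ℤ).symm
    rw [h1, h2, h3, ← Finset.prod_union_inter, hint, Finset.prod_singleton,
      cyclotomic_one, ← Finset.prod_sdiff hsub]
    ring
  · intro hdvd
    obtain ⟨c, hc⟩ := hdvd
    have heval : eval 1 (∏ d ∈ Dpq \ (Dp ∪ Dq), cyclotomic d ℤ) = 0 := by
      rw [hc]; simp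
    rw [eval_prod, Finset.prod_eq_one] at heval
    · exact one_ne_zero heval
    intro d hd
    simp only [Finset.mem_sdiff, Finset.mem_union, Nat.mem_divisors, hDp, hDq, hDpq,
      not_or] at hd
    obtain ⟨⟨hdpq, -⟩, hnd⟩ := hd
    have hndp : ¬ d ∣ p := fun h => hnd.1 ⟨h, hp.ne'⟩
    have hndq : ¬ d ∣ q := fun h => hnd.2 ⟨h, hq.ne'⟩
    apply eval_one_cyclotomic_not_prime_pow
    intro r hr' k heq
    subst heq
    by_cases hrp : r ∣ p
    · have hrq : ¬ r ∣ q := fun h =>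
        hr'.one_lt.ne' (Nat.eq_one_of_dvd_one (hpq ▸ Nat.dvd_gcd hrp h))
      have hcop : Nat.Coprime (r ^ k) q :=
        Nat.Coprime.pow_left k ((Nat.Prime.coprime_iff_not_dvd hr').mpr hrq)
      exact hndp (hcop.dvd_of_dvd_mul_right hdpq)
    · have hcop : Nat.Coprime (r ^ k) p :=
        Nat.Coprime.pow_left k ((Nat.Prime.coprime_iff_not_dvd hr').mpr hrp)
      exact hndq (hcop.dvd_of_dvd_mul_left hdpq)
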